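/- arXiv:0904.0524 — 3 statements merged into one kernel-verified Lean document; each statement's English description precedes it below -/
import Mathlib

section
/- Let ø be a Dedekind domain and let A, B be n×n matrices over ø with nonzero determinant. Then for every 1 ≤ k ≤ n, the ideal δ_{n-k}(A)·δ_{n-k}(B)·δ_k(AB) divides the ideal δ_{n-k}(A)·δ_k(A)·δ_n(B) + δ_{n-k}(B)·δ_k(B)·δ_n(A). (Equivalently, in terms of fractional ideals, δ_k(AB) divides δ_k(A)·δ_n(B)·δ_{n-k}(B)^{-1} + δ_k(B)·δ_n(A)·δ_{n-k}(A)^{-1}.) -/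
/-- The `k`-th determinantal divisor of a square matrix: the ideal generated by
all `k × k` minors.  For `k = 0` this is the whole ring, and for `k` larger than
the size of the matrix it is the zero ideal. -/
def detDiv {R : Type*} [CommRing R] {ι : Type*} [Fintype ι] (k : ℕ)
    (A : Matrix ι ι R) : Ideal R :=
  Ideal.span {x | ∃ f g : Fin k ↪ ι, x = (A.submatrix f g).det}

section AuxiliaryLemmas

open Finset Matrix Equiv

variable {R : Type*} [CommRing R] {k n : ℕ}

theorem det_mul_expand (P : Matrix (Fin k) (Fin n) R) (Q : Matrix (Fin n) (Fin k) R) :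
    (P * Q).det = ∑ p : Fin k → Fin n, (P.submatrix id p).det * ∏ i, Q (p i) i := by
  have h1 : (P * Q).det
      = ∑ p : Fin k → Fin n, ∑ σ : Equiv.Perm (Fin k),
          (Equiv.Perm.sign σ : R) * ∏ i, (P (σ i) (p i) * Q (p i) i) := by
    simp only [det_apply', mul_apply, Finset.prod_univ_sum, Finset.mul_sum,
      Fintype.piFinset_univ]
    rw [Finset.sum_comm]
  rw [h1]
  refine Finset.sum_congr rfl fun p _ => ?_
  rw [det_apply', Finset.sum_mul]
  refine Finset.sum_congr rfl fun σ _ => ?_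
  rw [Finset.prod_mul_distrib]
  simp [submatrix_apply, mul_assoc]

theorem det_mul_expand_inj (P : Matrix (Fin k) (Fin n) R) (Q : Matrix (Fin n) (Fin k) R) :
    (P * Q).det = ∑ p ∈ Finset.univ.filter (fun p : Fin k → Fin n => Function.Injective p),
      (P.submatrix id p).det * ∏ i, Q (p i) i := by
  rw [det_mul_expand]
  refine (Finset.sum_subset (Finset.filter_subset _ _) fun p _ hp => ?_).symm
  simp only [Finset.mem_filter, Finset.mem_univ, true_and] at hp
  obtain ⟨i, j, hij, hne⟩ : ∃ i j, p i = p j ∧ i ≠ j := by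
    rw [Function.Injective] at hp; push_neg at hp; exact hp
  rw [Matrix.det_zero_of_column_eq hne (fun r => by simp [hij]), zero_mul]

noncomputable def permOf {k n : ℕ} (p : Fin k → Fin n) (hp : Function.Injective p)
    (h : (Finset.univ.image p).card = k) : Equiv.Perm (Fin k) :=
  Equiv.ofBijective
    (fun i => ((Finset.univ.image p).orderIsoOfFin h).symm
      ⟨p i, Finset.mem_image_of_mem p (Finset.mem_univ i)⟩)
    (Finite.injective_iff_bijective.mp (by
      intro a b hab
      apply hp
      have := ((Finset.univ.image p).orderIsoOfFin h).symm.injective hab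
      exact congrArg Subtype.val this))

lemma permOf_spec {k n : ℕ} (p : Fin k → Fin n) (hp : Function.Injective p)
    (h : (Finset.univ.image p).card = k) (i : Fin k) :
    (Finset.univ.image p).orderEmbOfFin h (permOf p hp h i) = p i := by
  rw [← Finset.coe_orderIsoOfFin_apply]
  simp [permOf]

theorem cauchyBinet (P : Matrix (Fin k) (Fin n) R) (Q : Matrix (Fin n) (Fin k) R) :
    (P * Q).det = ∑ S : {S : Finset (Fin n) // S.card = k},
      (P.submatrix id (S.1.orderEmbOfFin S.2)).det *
        (Q.submatrix (S.1.orderEmbOfFin S.2) id).det := by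
  classical
  rw [det_mul_expand_inj]
  have inner : ∀ S : {S : Finset (Fin n) // S.card = k},
      (P.submatrix id (S.1.orderEmbOfFin S.2)).det *
        (Q.submatrix (S.1.orderEmbOfFin S.2) id).det
      = ∑ σ : Equiv.Perm (Fin k),
          (P.submatrix id (⇑(S.1.orderEmbOfFin S.2) ∘ ⇑σ)).det *
            ∏ i, Q (S.1.orderEmbOfFin S.2 (σ i)) i := by
    intro S
    rw [det_apply' (Q.submatrix _ id), Finset.mul_sum]
    refine Finset.sum_congr rfl fun σ _ => ?_
    have hsub : P.submatrix id (⇑(S.1.orderEmbOfFin S.2) ∘ ⇑σ)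
        = (P.submatrix id (S.1.orderEmbOfFin S.2)).submatrix id σ := by
      simp [Matrix.submatrix_submatrix]
    rw [hsub, Matrix.det_permute' σ]
    simp only [Matrix.submatrix_apply, id_eq]
    ring
  simp only [inner]
  rw [← Fintype.sum_prod_type']
  refine (Finset.sum_bij
    (i := fun (x : {S : Finset (Fin n) // S.card = k} × Equiv.Perm (Fin k)) _ =>
      ⇑(x.1.1.orderEmbOfFin x.1.2) ∘ ⇑x.2) ?_ ?_ ?_ ?_).symm
  · intro x _
    simp only [Finset.mem_filter, Finset.mem_univ, true_and]
    exact (x.1.1.orderEmbOfFin x.1.2).injective.comp x.2.injective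
  · have key : ∀ (S : Finset (Fin n)) (h : S.card = k) (σ : Equiv.Perm (Fin k)),
        Set.range (⇑(S.orderEmbOfFin h) ∘ ⇑σ) = (S : Set (Fin n)) := by
      intro S h σ
      rw [Set.range_comp, Set.range_eq_univ.mpr σ.surjective, Set.image_univ,
        S.range_orderEmbOfFin h]
    intro x₁ hm₁ x₂ hm₂ hpq
    obtain ⟨⟨S₁, h₁⟩, σ₁⟩ := x₁
    obtain ⟨⟨S₂, h₂⟩, σ₂⟩ := x₂
    simp only at hpq
    have hrange : S₁ = S₂ := Finset.coe_injective
      (by rw [← key S₁ h₁ σ₁, hpq, key S₂ h₂ σ₂])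
    subst hrange
    have hσ : σ₁ = σ₂ := by
      refine Equiv.ext fun i => ?_
      exact (S₁.orderEmbOfFin h₁).injective (congrFun hpq i)
    simp [hσ]
  · intro p hp
    simp only [Finset.mem_filter, Finset.mem_univ, true_and] at hp
    have hc : (Finset.univ.image p).card = k := by
      rw [Finset.card_image_of_injective _ hp, Finset.card_univ, Fintype.card_fin]
    refine ⟨⟨⟨Finset.univ.image p, hc⟩, permOf p hp hc⟩, Finset.mem_univ _, ?_⟩
    funext i
    exact permOf_spec p hp hc i
  · intro x _
    rfl


theorem adjugate_minor_mem {R : Type*} [CommRing R] [IsDomain R] {n k : ℕ}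
    (hk : 1 ≤ k) (hkn : k ≤ n) (B : Matrix (Fin n) (Fin n) R) (hB : B.det ≠ 0)
    (p q : Fin k ↪ Fin n) :
    ((B.adjugate).submatrix p q).det ∈ Ideal.span {B.det ^ (k-1)} * detDiv (n-k) B := by
  classical
  have hcard : ∀ f : Fin k ↪ Fin n, ((Finset.univ.image f)ᶜ : Finset (Fin n)).card = n - k := by
    intro f
    rw [Finset.card_compl, Finset.card_image_of_injective _ f.injective, Finset.card_univ,
      Fintype.card_fin, Fintype.card_fin]
  set p' : Fin (n-k) ↪o Fin n := ((Finset.univ.image p)ᶜ).orderEmbOfFin (hcard p) with hp'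
  set q' : Fin (n-k) ↪o Fin n := ((Finset.univ.image q)ᶜ).orderEmbOfFin (hcard q) with hq'
  have hdisjp : ∀ a b, p a ≠ p' b := by
    intro a b h
    have h1 : p' b ∈ (Finset.univ.image p)ᶜ := Finset.orderEmbOfFin_mem _ _ _
    rw [← h] at h1
    exact (Finset.mem_compl.mp h1) (Finset.mem_image_of_mem p (Finset.mem_univ a))
  have hdisjq : ∀ a b, q a ≠ q' b := by
    intro a b h
    have h1 : q' b ∈ (Finset.univ.image q)ᶜ := Finset.orderEmbOfFin_mem _ _ _
    rw [← h] at h1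
    exact (Finset.mem_compl.mp h1) (Finset.mem_image_of_mem q (Finset.mem_univ a))
  have hcardsum : Fintype.card (Fin k ⊕ Fin (n-k)) = Fintype.card (Fin n) := by
    simp [Nat.add_sub_cancel' hkn]
  have mkEquiv : ∀ (f : Fin k ↪ Fin n) (f' : Fin (n-k) ↪o Fin n),
      (∀ a b, f a ≠ f' b) → Function.Bijective (Sum.elim ⇑f ⇑f') := by
    intro f f' hdisj
    refine (Fintype.bijective_iff_injective_and_card _).mpr ⟨?_, hcardsum⟩
    intro x y h
    match x, y with
    | Sum.inl a, Sum.inl b => exact congrArg Sum.inl (f.injective h)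
    | Sum.inl a, Sum.inr b => exact absurd h (hdisj a b)
    | Sum.inr a, Sum.inl b => exact absurd h.symm (hdisj b a)
    | Sum.inr a, Sum.inr b => exact congrArg Sum.inr (f'.injective h)
  set eR : Fin k ⊕ Fin (n-k) ≃ Fin n :=
    Equiv.ofBijective _ (mkEquiv p p' hdisjp) with heR
  set eC : Fin k ⊕ Fin (n-k) ≃ Fin n :=
    Equiv.ofBijective _ (mkEquiv q q' hdisjq) with heC
  set X : Matrix (Fin n) (Fin n) R := fun i j =>
    Sum.elim (fun a => B.adjugate i (q a)) (fun b => if i = p' b then 1 else 0) (eC.symm j)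
    with hXdef
  have hXcol : ∀ (i : Fin n) (c : Fin k ⊕ Fin (n-k)), X i (eC c) =
      Sum.elim (fun a => B.adjugate i (q a)) (fun b => if i = p' b then 1 else 0) c := by
    intro i c
    rw [hXdef]
    simp only [Equiv.symm_apply_apply]
  have heRl : ∀ a, eR (Sum.inl a) = p a := fun a => rfl
  have heRr : ∀ b, eR (Sum.inr b) = p' b := fun b => rfl
  have heCl : ∀ a, eC (Sum.inl a) = q a := fun a => rfl
  have heCr : ∀ b, eC (Sum.inr b) = q' b := fun b => rfl
  have hX1 : X.submatrix ⇑eR ⇑eC =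
      Matrix.fromBlocks ((B.adjugate).submatrix ⇑p ⇑q) 0 ((B.adjugate).submatrix ⇑p' ⇑q) 1 := by
    ext x y
    match x, y with
    | Sum.inl i, Sum.inl j => simp [hXcol (p i) (Sum.inl j), heRl]
    | Sum.inl i, Sum.inr j =>
      simp only [Matrix.submatrix_apply, heRl, hXcol (p i) (Sum.inr j)]
      simp [hdisjp i j]
    | Sum.inr i, Sum.inl j => simp [hXcol (p' i) (Sum.inl j), heRr]
    | Sum.inr i, Sum.inr j =>
      simp only [Matrix.submatrix_apply, heRr, hXcol (p' i) (Sum.inr j)]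
      simp [Matrix.fromBlocks, Matrix.one_apply, p'.injective.eq_iff]
  have hdet1 : (X.submatrix ⇑eR ⇑eC).det = ((B.adjugate).submatrix ⇑p ⇑q).det := by
    rw [hX1, Matrix.det_fromBlocks_zero₁₂]
    simp
  have hX2 : (B * X).submatrix ⇑eC ⇑eC =
      Matrix.fromBlocks (B.det • (1 : Matrix (Fin k) (Fin k) R)) (B.submatrix ⇑q ⇑p')
        0 (B.submatrix ⇑q' ⇑p') := by
    have hcol1 : ∀ (r : Fin n) (j : Fin k), (B * X) r (eC (Sum.inl j)) =
        B.det * (if r = q j then 1 else 0) := by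
      intro r j
      have : (B * X) r (eC (Sum.inl j)) = (B * B.adjugate) r (q j) := by
        simp only [Matrix.mul_apply]
        exact Finset.sum_congr rfl fun m _ => by rw [hXcol m (Sum.inl j)]; simp
      rw [this, Matrix.mul_adjugate]
      simp [Matrix.one_apply]
    have hcol2 : ∀ (r : Fin n) (j : Fin (n-k)), (B * X) r (eC (Sum.inr j)) = B r (p' j) := by
      intro r j
      have : (B * X) r (eC (Sum.inr j)) = ∑ m, B r m * (if m = p' j then 1 else 0) := by
        simp only [Matrix.mul_apply]
        exact Finset.sum_congr rfl fun m _ => by rw [hXcol m (Sum.inr j)]; simp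
      rw [this]
      simp
    ext x y
    match x, y with
    | Sum.inl i, Sum.inl j =>
      simp only [Matrix.submatrix_apply]
      rw [hcol1, heCl]
      simp [Matrix.one_apply, q.injective.eq_iff, mul_ite]
    | Sum.inl i, Sum.inr j =>
      simp only [Matrix.submatrix_apply]
      rw [hcol2, heCl]
      simp
    | Sum.inr i, Sum.inl j =>
      simp only [Matrix.submatrix_apply]
      rw [hcol1, heCr]
      simp [Ne.symm (hdisjq j i)]
    | Sum.inr i, Sum.inr j =>
      simp only [Matrix.submatrix_apply]
      rw [hcol2, heCr]
      simp
  have hdet2 : ((B * X).submatrix ⇑eC ⇑eC).det = B.det ^ k * (B.submatrix ⇑q' ⇑p').det := by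
    rw [hX2, Matrix.det_fromBlocks_zero₂₁]
    simp [Matrix.det_smul, Fintype.card_fin]
  have hmul : (B.submatrix ⇑eC ⇑eR) * (X.submatrix ⇑eR ⇑eC) = (B * X).submatrix ⇑eC ⇑eC :=
    Matrix.submatrix_mul_equiv B X ⇑eC eR ⇑eC
  set ε : R := ((Equiv.Perm.sign (eC.trans eR.symm) : ℤ) : R) with hε
  have hdetB' : (B.submatrix ⇑eC ⇑eR).det = ε * B.det := by
    have h0 : B.submatrix ⇑eC ⇑eR = ((B.submatrix ⇑eR ⇑eR).submatrix ⇑(eC.trans eR.symm) id) := by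
      ext i j
      simp [Equiv.apply_symm_apply]
    rw [h0, Matrix.det_permute, Matrix.det_submatrix_equiv_self]
  have hε2 : ε * ε = 1 := by
    rw [hε, ← Int.cast_mul, ← Units.val_mul, ← sq, Int.units_sq]
    simp
  have main : B.det ^ k * (B.submatrix ⇑q' ⇑p').det
      = ε * B.det * ((B.adjugate).submatrix ⇑p ⇑q).det := by
    rw [← hdet2, ← hmul, Matrix.det_mul, hdetB', hdet1]
  have main2 : B.det * (ε * B.det ^ (k-1) * (B.submatrix ⇑q' ⇑p').det)
      = B.det * ((B.adjugate).submatrix ⇑p ⇑q).det := by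
    have hpow : B.det ^ k = B.det * B.det ^ (k-1) := by
      rw [← pow_succ', Nat.sub_add_cancel hk]
    calc B.det * (ε * B.det ^ (k-1) * (B.submatrix ⇑q' ⇑p').det)
        = ε * (B.det ^ k * (B.submatrix ⇑q' ⇑p').det) := by rw [hpow]; ring
      _ = ε * (ε * B.det * ((B.adjugate).submatrix ⇑p ⇑q).det) := by rw [main]
      _ = (ε * ε) * (B.det * ((B.adjugate).submatrix ⇑p ⇑q).det) := by ring
      _ = B.det * ((B.adjugate).submatrix ⇑p ⇑q).det := by rw [hε2, one_mul]
  have hfin : ((B.adjugate).submatrix ⇑p ⇑q).det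
      = B.det ^ (k-1) * (ε * (B.submatrix ⇑q' ⇑p').det) := by
    have := mul_left_cancel₀ hB main2
    rw [← this]; ring
  rw [hfin]
  refine Ideal.mul_mem_mul (Ideal.subset_span rfl) ?_
  exact Ideal.mul_mem_left _ ε (Ideal.subset_span ⟨q'.toEmbedding, p'.toEmbedding, rfl⟩)

theorem detDiv_transpose {R : Type*} [CommRing R] {n k : ℕ} (M : Matrix (Fin n) (Fin n) R) :
    detDiv k Mᵀ = detDiv k M := by
  unfold detDiv
  congr 1
  ext x
  constructor
  · rintro ⟨f, g, rfl⟩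
    exact ⟨g, f, by rw [← Matrix.transpose_submatrix, Matrix.det_transpose]⟩
  · rintro ⟨f, g, rfl⟩
    exact ⟨g, f, by rw [← Matrix.transpose_submatrix, Matrix.det_transpose]⟩

theorem detDiv_top_le {R : Type*} [CommRing R] {n : ℕ} (M : Matrix (Fin n) (Fin n) R) :
    detDiv n M ≤ Ideal.span {M.det} := by
  rw [detDiv, Ideal.span_le]
  rintro x ⟨f, g, rfl⟩
  have hbf : Function.Bijective ⇑f := (Fintype.bijective_iff_injective_and_card _).mpr
    ⟨f.injective, rfl⟩
  have hbg : Function.Bijective ⇑g := (Fintype.bijective_iff_injective_and_card _).mpr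
    ⟨g.injective, rfl⟩
  set ef := Equiv.ofBijective _ hbf with hef
  set eg := Equiv.ofBijective _ hbg with heg
  have h0 : M.submatrix ⇑f ⇑g = (M.submatrix ⇑eg ⇑eg).submatrix ⇑(ef.trans eg.symm) id := by
    ext i j
    simp [hef, heg, Equiv.apply_symm_apply]
    exact congrArg (fun x => M x (g j)) (Equiv.ofBijective_apply_symm_apply (⇑g) hbg (f i)).symm
  rw [SetLike.mem_coe, h0, Matrix.det_permute, Matrix.det_submatrix_equiv_self,
    Ideal.mem_span_singleton]
  exact Dvd.intro_left _ rfl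

theorem det_mul_detDiv_le {R : Type*} [CommRing R] [IsDomain R] {n k : ℕ}
    (hk : 1 ≤ k) (hkn : k ≤ n) (A B : Matrix (Fin n) (Fin n) R) (hB : B.det ≠ 0) :
    Ideal.span {B.det} * detDiv k A ≤ detDiv (n-k) B * detDiv k (A * B) := by
  classical
  rw [Ideal.span_singleton_mul_le_iff]
  intro x hx
  have hgen : ∀ f g : Fin k ↪ Fin n,
      B.det * (A.submatrix ⇑f ⇑g).det ∈ detDiv (n-k) B * detDiv k (A * B) := by
    intro f g
    have e1 : (A * B) * B.adjugate = B.det • A := by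
      rw [Matrix.mul_assoc, Matrix.mul_adjugate, Matrix.mul_smul, Matrix.mul_one]
    have e2 : ((B.det • A).submatrix ⇑f ⇑g).det = B.det ^ k * (A.submatrix ⇑f ⇑g).det := by
      have : (B.det • A).submatrix ⇑f ⇑g = B.det • (A.submatrix ⇑f ⇑g) := by
        ext i j
        simp [Matrix.smul_apply]
      rw [this, Matrix.det_smul, Fintype.card_fin]
    have e3 : ((A * B).submatrix ⇑f id) * ((B.adjugate).submatrix id ⇑g)
        = (B.det • A).submatrix ⇑f ⇑g := by
      rw [← e1]
      simpa using Matrix.submatrix_mul_equiv (A * B) B.adjugate ⇑f (Equiv.refl (Fin n)) ⇑g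
    have hmem : B.det ^ k * (A.submatrix ⇑f ⇑g).det ∈
        Ideal.span {B.det ^ (k-1)} * (detDiv (n-k) B * detDiv k (A * B)) := by
      rw [← e2, ← e3, cauchyBinet]
      refine Ideal.sum_mem _ fun S _ => ?_
      have hP : (((A * B).submatrix ⇑f id).submatrix id ⇑(S.1.orderEmbOfFin S.2)).det
          ∈ detDiv k (A * B) := by
        rw [Matrix.submatrix_submatrix]
        exact Ideal.subset_span ⟨f, (S.1.orderEmbOfFin S.2).toEmbedding, by simp⟩
      have hQ : (((B.adjugate).submatrix id ⇑g).submatrix ⇑(S.1.orderEmbOfFin S.2) id).det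
          ∈ Ideal.span {B.det ^ (k-1)} * detDiv (n-k) B := by
        rw [Matrix.submatrix_submatrix]
        have := adjugate_minor_mem hk hkn B hB (S.1.orderEmbOfFin S.2).toEmbedding g
        simpa using this
      have hre : detDiv k (A * B) * (Ideal.span {B.det ^ (k-1)} * detDiv (n-k) B)
          = Ideal.span {B.det ^ (k-1)} * (detDiv (n-k) B * detDiv k (A * B)) := by
        ring
      rw [← hre]
      exact Ideal.mul_mem_mul hP hQ
    have hmem2 : B.det ^ (k-1) * (B.det * (A.submatrix ⇑f ⇑g).det) ∈
        Ideal.span {B.det ^ (k-1)} * (detDiv (n-k) B * detDiv k (A * B)) := by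
      have hre2 : B.det ^ (k-1) * (B.det * (A.submatrix ⇑f ⇑g).det)
          = B.det ^ k * (A.submatrix ⇑f ⇑g).det := by
        rw [← mul_assoc, ← pow_succ, Nat.sub_add_cancel hk]
      rw [hre2]
      exact hmem
    obtain ⟨z, hz, hzeq⟩ := Ideal.mem_span_singleton_mul.mp hmem2
    have := mul_left_cancel₀ (pow_ne_zero (k-1) hB) hzeq
    rw [← this]
    exact hz
  refine Submodule.span_induction (fun y hy => ?_) (by simp) (fun y z _ _ hy hz => ?_)
    (fun r y _ hy => ?_) hx
  · obtain ⟨f, g, rfl⟩ := hy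
    exact hgen f g
  · rw [mul_add]; exact Ideal.add_mem _ hy hz
  · rw [smul_eq_mul, mul_left_comm]
    exact Ideal.mul_mem_left _ r hy

theorem det_mul_detDiv_le' {R : Type*} [CommRing R] [IsDomain R] {n k : ℕ}
    (hk : 1 ≤ k) (hkn : k ≤ n) (A B : Matrix (Fin n) (Fin n) R) (hA : A.det ≠ 0) :
    Ideal.span {A.det} * detDiv k B ≤ detDiv (n-k) A * detDiv k (A * B) := by
  have := det_mul_detDiv_le hk hkn Bᵀ Aᵀ (by rwa [Matrix.det_transpose])
  rw [Matrix.det_transpose, detDiv_transpose, detDiv_transpose, ← Matrix.transpose_mul,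
    detDiv_transpose] at this
  exact this


end AuxiliaryLemmas

/-- Upper bound: `δ_{n-k}(A) δ_{n-k}(B) δ_k(A B)` divides
`δ_{n-k}(A) δ_k(A) δ_n(B) + δ_{n-k}(B) δ_k(B) δ_n(A)`. -/
theorem detDiv_mul_dvd_sum (𝒪 : Type*) [CommRing 𝒪] [IsDomain 𝒪]
    [IsDedekindDomain 𝒪] (n : ℕ) (A B : Matrix (Fin n) (Fin n) 𝒪)
    (hA : A.det ≠ 0) (hB : B.det ≠ 0) :
    ∀ k, 1 ≤ k → k ≤ n →
      detDiv (n - k) A * detDiv (n - k) B * detDiv k (A * B) ∣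
        detDiv (n - k) A * detDiv k A * detDiv n B +
          detDiv (n - k) B * detDiv k B * detDiv n A := by
  intro k hk hkn
  rw [Ideal.dvd_iff_le]
  have h1 := det_mul_detDiv_le hk hkn A B hB
  have h2 := det_mul_detDiv_le' hk hkn A B hA
  refine sup_le ?_ ?_
  · calc detDiv (n - k) A * detDiv k A * detDiv n B
        ≤ detDiv (n - k) A * detDiv k A * Ideal.span {B.det} :=
          Ideal.mul_mono_right (detDiv_top_le B)
      _ = detDiv (n - k) A * (Ideal.span {B.det} * detDiv k A) := by ring
      _ ≤ detDiv (n - k) A * (detDiv (n - k) B * detDiv k (A * B)) :=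
          Ideal.mul_mono_right h1
      _ = detDiv (n - k) A * detDiv (n - k) B * detDiv k (A * B) := by ring
  · calc detDiv (n - k) B * detDiv k B * detDiv n A
        ≤ detDiv (n - k) B * detDiv k B * Ideal.span {A.det} :=
          Ideal.mul_mono_right (detDiv_top_le A)
      _ = detDiv (n - k) B * (Ideal.span {A.det} * detDiv k B) := by ring
      _ ≤ detDiv (n - k) B * (detDiv (n - k) A * detDiv k (A * B)) :=
          Ideal.mul_mono_right h2
      _ = detDiv (n - k) A * detDiv (n - k) B * detDiv k (A * B) := by ring
end

section
/- Let ø be a principal ideal domain and let a_1, a_2, b_1, b_2, c_1, c_2 be nonzero ideals of ø. The triple ((a_1, a_2), (b_1, b_2), (c_1, c_2)) is realisable if and only if the following conditions hold: (1) a_1² divides a_2, b_1² divides b_2, and c_1² divides c_2; (2) a_2·b_2 = c_2; (3) a_1·b_1 divides c_1 and a_1·b_1·c_1 divides b_1²·a_2 + a_1²·b_2 (equivalently, c_1 divides a_1·b_1·(a_1^{-2}·a_2 + b_1^{-2}·b_2) as fractional ideals). -/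
/-- The triple `((a₁, …, aₙ), (b₁, …, bₙ), (c₁, …, cₙ))` of lists of ideals is
realisable if there are `n × n` matrices `A, B` with nonzero determinant such
that `δ_k(A) = a_k`, `δ_k(B) = b_k` and `δ_k(A * B) = c_k` for all `1 ≤ k ≤ n`. -/
def Realisable {R : Type*} [CommRing R] (n : ℕ) (a b c : ℕ → Ideal R) : Prop :=
  ∃ A B : Matrix (Fin n) (Fin n) R, A.det ≠ 0 ∧ B.det ≠ 0 ∧
    ∀ k, 1 ≤ k → k ≤ n → detDiv k A = a k ∧ detDiv k B = b k ∧ detDiv k (A * B) = c k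

namespace DetDivAux

variable {R : Type*} [CommRing R]

def emb1 (i : Fin 2) : Fin 1 ↪ Fin 2 := ⟨fun _ => i, fun a b _ => Subsingleton.elim a b⟩

lemma entry_mem_detDiv_one (M : Matrix (Fin 2) (Fin 2) R) (i j : Fin 2) :
    M i j ∈ detDiv 1 M := by
  apply Ideal.subset_span
  exact ⟨emb1 i, emb1 j, by simp [Matrix.det_fin_one, emb1]; rfl⟩

lemma detDiv_one_le (M : Matrix (Fin 2) (Fin 2) R) {I : Ideal R}
    (h : ∀ i j, M i j ∈ I) : detDiv 1 M ≤ I := by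
  rw [detDiv, Ideal.span_le]
  rintro x ⟨f, g, rfl⟩
  rw [Matrix.det_fin_one]
  exact h _ _

lemma fin2_cases (i : Fin 2) : i = 0 ∨ i = 1 := by omega

lemma emb_fin2 (f : Fin 2 ↪ Fin 2) : (f 0 = 0 ∧ f 1 = 1) ∨ (f 0 = 1 ∧ f 1 = 0) := by
  have h := f.injective.ne (show (0 : Fin 2) ≠ 1 by decide)
  rcases fin2_cases (f 0) with h0 | h0 <;> rcases fin2_cases (f 1) with h1 | h1 <;>
    simp_all

lemma det_submatrix_mem (M : Matrix (Fin 2) (Fin 2) R) (f g : Fin 2 ↪ Fin 2) :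
    (M.submatrix f g).det ∈ Ideal.span {M.det} := by
  rw [Ideal.mem_span_singleton, Matrix.det_fin_two (M.submatrix f g)]
  rcases emb_fin2 f with ⟨h0, h1⟩ | ⟨h0, h1⟩ <;> rcases emb_fin2 g with ⟨k0, k1⟩ | ⟨k0, k1⟩ <;>
    simp only [Matrix.submatrix_apply, h0, h1, k0, k1] <;> rw [Matrix.det_fin_two] <;>
    first
      | (refine ⟨1, ?_⟩; ring1)
      | (refine ⟨-1, ?_⟩; ring1)

lemma detDiv_two (M : Matrix (Fin 2) (Fin 2) R) : detDiv 2 M = Ideal.span {M.det} := by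
  apply le_antisymm
  · rw [detDiv, Ideal.span_le]
    rintro x ⟨f, g, rfl⟩
    exact det_submatrix_mem M f g
  · rw [Ideal.span_le, Set.singleton_subset_iff]
    apply Ideal.subset_span
    refine ⟨Function.Embedding.refl _, Function.Embedding.refl _, ?_⟩
    rfl

lemma adj_entry_mem (A : Matrix (Fin 2) (Fin 2) R) (i j : Fin 2) :
    A.adjugate i j ∈ detDiv 1 A := by
  rw [Matrix.adjugate_fin_two]
  fin_cases i <;> fin_cases j <;> simp <;>
    first
      | exact entry_mem_detDiv_one A _ _
      | exact Ideal.neg_mem _ (entry_mem_detDiv_one A _ _)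

lemma det_mul_entry_mem_left (A B : Matrix (Fin 2) (Fin 2) R) (i j : Fin 2) :
    A.det * B i j ∈ detDiv 1 A * detDiv 1 (A * B) := by
  have h : A.det • B = A.adjugate * (A * B) := by
    rw [← Matrix.mul_assoc, Matrix.adjugate_mul, Matrix.smul_mul, Matrix.one_mul]
  have h2 : A.det * B i j = ∑ k, A.adjugate i k * (A * B) k j := by
    have := congrFun (congrFun h i) j
    simpa [Matrix.mul_apply, Matrix.smul_apply, smul_eq_mul] using this
  rw [h2]
  exact Ideal.sum_mem _ fun k _ =>
    Ideal.mul_mem_mul (adj_entry_mem A i k) (entry_mem_detDiv_one (A * B) k j)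

lemma det_mul_entry_mem_right (A B : Matrix (Fin 2) (Fin 2) R) (i j : Fin 2) :
    B.det * A i j ∈ detDiv 1 (A * B) * detDiv 1 B := by
  have h : B.det • A = (A * B) * B.adjugate := by
    rw [Matrix.mul_assoc, Matrix.mul_adjugate, Matrix.mul_smul, Matrix.mul_one]
  have h2 : B.det * A i j = ∑ k, (A * B) i k * B.adjugate k j := by
    have := congrFun (congrFun h i) j
    simpa [Matrix.mul_apply, Matrix.smul_apply, smul_eq_mul] using this
  rw [h2]
  exact Ideal.sum_mem _ fun k _ =>
    Ideal.mul_mem_mul (entry_mem_detDiv_one (A * B) i k) (adj_entry_mem B k j)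

lemma key_left (A B : Matrix (Fin 2) (Fin 2) R) :
    detDiv 1 B * Ideal.span {A.det} ≤ detDiv 1 A * detDiv 1 (A * B) := by
  rw [Ideal.mul_le]
  intro r hr s hs
  rw [Ideal.mem_span_singleton'] at hs
  obtain ⟨cs, rfl⟩ := hs
  have hrw : r * (cs * A.det) = cs * (A.det * r) := by ring
  rw [hrw]
  apply Ideal.mul_mem_left
  have hle : detDiv 1 B ≤
      Submodule.comap (LinearMap.mulLeft R A.det) (detDiv 1 A * detDiv 1 (A * B)) :=
    detDiv_one_le B fun i j => det_mul_entry_mem_left A B i j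
  exact hle hr

lemma key_right (A B : Matrix (Fin 2) (Fin 2) R) :
    detDiv 1 A * Ideal.span {B.det} ≤ detDiv 1 (A * B) * detDiv 1 B := by
  rw [Ideal.mul_le]
  intro r hr s hs
  rw [Ideal.mem_span_singleton'] at hs
  obtain ⟨cs, rfl⟩ := hs
  have hrw : r * (cs * B.det) = cs * (B.det * r) := by ring
  rw [hrw]
  apply Ideal.mul_mem_left
  have hle : detDiv 1 A ≤
      Submodule.comap (LinearMap.mulLeft R B.det) (detDiv 1 (A * B) * detDiv 1 B) :=
    detDiv_one_le A fun i j => det_mul_entry_mem_right A B i j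
  exact hle hr

lemma detDiv_two_le_sq (A : Matrix (Fin 2) (Fin 2) R) :
    detDiv 2 A ≤ (detDiv 1 A) ^ 2 := by
  rw [detDiv_two, Ideal.span_le, Set.singleton_subset_iff, sq, Matrix.det_fin_two]
  exact sub_mem
    (Ideal.mul_mem_mul (entry_mem_detDiv_one A 0 0) (entry_mem_detDiv_one A 1 1))
    (Ideal.mul_mem_mul (entry_mem_detDiv_one A 0 1) (entry_mem_detDiv_one A 1 0))

lemma detDiv_one_mul_le (A B : Matrix (Fin 2) (Fin 2) R) :
    detDiv 1 (A * B) ≤ detDiv 1 A * detDiv 1 B := by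
  refine detDiv_one_le _ fun i j => ?_
  rw [Matrix.mul_apply]
  exact Ideal.sum_mem _ fun k _ =>
    Ideal.mul_mem_mul (entry_mem_detDiv_one A i k) (entry_mem_detDiv_one B k j)

end DetDivAux

open DetDivAux

/-- Characterisation of realisability for `2 × 2` matrices over a principal
ideal domain. -/
theorem realisable_iff_two_by_two (𝒪 : Type*) [CommRing 𝒪] [IsDomain 𝒪]
    [IsPrincipalIdealRing 𝒪] (a b c : ℕ → Ideal 𝒪)
    (ha1 : a 1 ≠ ⊥) (ha2 : a 2 ≠ ⊥) (hb1 : b 1 ≠ ⊥) (hb2 : b 2 ≠ ⊥)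
    (hc1 : c 1 ≠ ⊥) (hc2 : c 2 ≠ ⊥) :
    Realisable 2 a b c ↔
      ((a 1 ^ 2 ∣ a 2 ∧ b 1 ^ 2 ∣ b 2 ∧ c 1 ^ 2 ∣ c 2) ∧
        a 2 * b 2 = c 2 ∧
        (a 1 * b 1 ∣ c 1 ∧ a 1 * b 1 * c 1 ∣ b 1 ^ 2 * a 2 + a 1 ^ 2 * b 2)) := by
  constructor
  · rintro ⟨A, B, hA, hB, hspec⟩
    obtain ⟨hA1, hB1, hC1⟩ := hspec 1 le_rfl (by norm_num)
    obtain ⟨hA2, hB2, hC2⟩ := hspec 2 (by norm_num) le_rfl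
    rw [← hA1, ← hA2, ← hB1, ← hB2, ← hC1, ← hC2]
    refine ⟨⟨Ideal.dvd_iff_le.mpr (detDiv_two_le_sq A),
        Ideal.dvd_iff_le.mpr (detDiv_two_le_sq B),
        Ideal.dvd_iff_le.mpr (detDiv_two_le_sq (A * B))⟩, ?_,
        Ideal.dvd_iff_le.mpr (detDiv_one_mul_le A B), ?_⟩
    · rw [detDiv_two, detDiv_two, detDiv_two, Matrix.det_mul,
        Ideal.span_singleton_mul_span_singleton]
    · rw [Ideal.dvd_iff_le, detDiv_two, detDiv_two]
      have h1 : detDiv 1 B ^ 2 * Ideal.span {A.det} ≤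
          detDiv 1 A * detDiv 1 B * detDiv 1 (A * B) := by
        calc detDiv 1 B ^ 2 * Ideal.span {A.det}
            = detDiv 1 B * (detDiv 1 B * Ideal.span {A.det}) := by ring
          _ ≤ detDiv 1 B * (detDiv 1 A * detDiv 1 (A * B)) :=
              Ideal.mul_mono_right (key_left A B)
          _ = detDiv 1 A * detDiv 1 B * detDiv 1 (A * B) := by ring
      have h2 : detDiv 1 A ^ 2 * Ideal.span {B.det} ≤
          detDiv 1 A * detDiv 1 B * detDiv 1 (A * B) := by
        calc detDiv 1 A ^ 2 * Ideal.span {B.det}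
            = detDiv 1 A * (detDiv 1 A * Ideal.span {B.det}) := by ring
          _ ≤ detDiv 1 A * (detDiv 1 (A * B) * detDiv 1 B) :=
              Ideal.mul_mono_right (key_right A B)
          _ = detDiv 1 A * detDiv 1 B * detDiv 1 (A * B) := by ring
      exact sup_le h1 h2
  · rintro ⟨⟨hd1, hd2, _hd3⟩, heq2, hd4, hd5⟩
    -- extract generators
    obtain ⟨α, hα⟩ := (IsPrincipalIdealRing.principal (a 1)).principal
    obtain ⟨da, hda⟩ := (IsPrincipalIdealRing.principal (a 2)).principal
    obtain ⟨β, hβ⟩ := (IsPrincipalIdealRing.principal (b 1)).principal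
    obtain ⟨db, hdb⟩ := (IsPrincipalIdealRing.principal (b 2)).principal
    obtain ⟨e, he⟩ := (IsPrincipalIdealRing.principal (c 1)).principal
    rw [Ideal.submodule_span_eq] at hα hda hβ hdb he
    have hα0 : α ≠ 0 := by rintro rfl; exact ha1 (by simp [hα])
    have hβ0 : β ≠ 0 := by rintro rfl; exact hb1 (by simp [hβ])
    have hda0 : da ≠ 0 := by rintro rfl; exact ha2 (by simp [hda])
    have hdb0 : db ≠ 0 := by rintro rfl; exact hb2 (by simp [hdb])
    have he0 : e ≠ 0 := by rintro rfl; exact hc1 (by simp [he])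
    -- a 2 = (α² s)
    have hsle : a 2 ≤ a 1 ^ 2 := Ideal.le_of_dvd hd1
    rw [hα, hda, Ideal.span_singleton_pow, Ideal.span_le, Set.singleton_subset_iff,
      SetLike.mem_coe, Ideal.mem_span_singleton] at hsle
    obtain ⟨s, hs⟩ := hsle
    have hs0 : s ≠ 0 := by rintro rfl; simp at hs; exact hda0 hs
    have htle : b 2 ≤ b 1 ^ 2 := Ideal.le_of_dvd hd2
    rw [hβ, hdb, Ideal.span_singleton_pow, Ideal.span_le, Set.singleton_subset_iff,
      SetLike.mem_coe, Ideal.mem_span_singleton] at htle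
    obtain ⟨t, ht⟩ := htle
    have ht0 : t ≠ 0 := by rintro rfl; simp at ht; exact hdb0 ht
    -- c 1 = (α β h)
    have hele : c 1 ≤ a 1 * b 1 := Ideal.le_of_dvd hd4
    rw [hα, hβ, he, Ideal.span_singleton_mul_span_singleton, Ideal.span_le,
      Set.singleton_subset_iff, SetLike.mem_coe, Ideal.mem_span_singleton] at hele
    obtain ⟨h, hh⟩ := hele
    have hαβ0 : α ^ 2 * β ^ 2 ≠ 0 :=
      mul_ne_zero (pow_ne_zero _ hα0) (pow_ne_zero _ hβ0)
    -- h ∣ s and h ∣ t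
    have hle5 : b 1 ^ 2 * a 2 + a 1 ^ 2 * b 2 ≤ a 1 * b 1 * c 1 := Ideal.le_of_dvd hd5
    have hmem : ∀ x ∈ b 1 ^ 2 * a 2 + a 1 ^ 2 * b 2, x ∈ a 1 * b 1 * c 1 := fun x hx => hle5 hx
    have hhs : h ∣ s := by
      have h1 : β ^ 2 * da ∈ b 1 ^ 2 * a 2 := by
        rw [hβ, hda, Ideal.span_singleton_pow]
        exact Ideal.mul_mem_mul (Ideal.mem_span_singleton_self _)
          (Ideal.mem_span_singleton_self _)
      have h1' : β ^ 2 * da ∈ b 1 ^ 2 * a 2 + a 1 ^ 2 * b 2 := by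
        rw [Ideal.add_eq_sup]
        exact (le_sup_left : b 1 ^ 2 * a 2 ≤ _) h1
      have h2 := hle5 h1'
      rw [hα, hβ, he, Ideal.span_singleton_mul_span_singleton,
        Ideal.span_singleton_mul_span_singleton, Ideal.mem_span_singleton] at h2
      obtain ⟨u, hu⟩ := h2
      refine ⟨u, mul_left_cancel₀ hαβ0 ?_⟩
      calc α ^ 2 * β ^ 2 * s = β ^ 2 * da := by rw [hs]; ring
        _ = α * β * e * u := hu
        _ = α ^ 2 * β ^ 2 * (h * u) := by rw [hh]; ring
    have hht : h ∣ t := by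
      have h1 : α ^ 2 * db ∈ a 1 ^ 2 * b 2 := by
        rw [hα, hdb, Ideal.span_singleton_pow]
        exact Ideal.mul_mem_mul (Ideal.mem_span_singleton_self _)
          (Ideal.mem_span_singleton_self _)
      have h1' : α ^ 2 * db ∈ b 1 ^ 2 * a 2 + a 1 ^ 2 * b 2 := by
        rw [Ideal.add_eq_sup]
        exact (le_sup_right : a 1 ^ 2 * b 2 ≤ _) h1
      have h2 := hle5 h1'
      rw [hα, hβ, he, Ideal.span_singleton_mul_span_singleton,
        Ideal.span_singleton_mul_span_singleton, Ideal.mem_span_singleton] at h2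
      obtain ⟨u, hu⟩ := h2
      refine ⟨u, mul_left_cancel₀ hαβ0 ?_⟩
      calc α ^ 2 * β ^ 2 * t = α ^ 2 * db := by rw [ht]; ring
        _ = α * β * e * u := hu
        _ = α ^ 2 * β ^ 2 * (h * u) := by rw [hh]; ring
    -- construction
    set A : Matrix (Fin 2) (Fin 2) 𝒪 := !![α, 0; 0, α * s] with hAdef
    set B : Matrix (Fin 2) (Fin 2) 𝒪 := !![h * β, -(β * t); β, 0] with hBdef
    have hdetA : A.det = α ^ 2 * s := by
      rw [hAdef, Matrix.det_fin_two_of]; ring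
    have hdetB : B.det = β ^ 2 * t := by
      rw [hBdef, Matrix.det_fin_two_of]; ring
    have hAB : A * B = !![α * β * h, -(α * β * t); α * β * s, 0] := by
      rw [hAdef, hBdef, Matrix.mul_fin_two]
      congr 1 <;> ring_nf
    have hdA1 : detDiv 1 A = a 1 := by
      rw [hα]
      refine le_antisymm (detDiv_one_le A ?_) ?_
      · intro i j
        fin_cases i <;> fin_cases j <;>
          simp [hAdef, Ideal.mem_span_singleton] <;>
          first
            | exact Dvd.intro _ rfl
            | exact Dvd.intro_left _ rfl
      · rw [Ideal.span_le, Set.singleton_subset_iff]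
        have := entry_mem_detDiv_one A 0 0
        simpa [hAdef] using this
    have hdB1 : detDiv 1 B = b 1 := by
      rw [hβ]
      refine le_antisymm (detDiv_one_le B ?_) ?_
      · intro i j
        fin_cases i <;> fin_cases j <;>
          simp [hBdef, Ideal.mem_span_singleton] <;>
          first
            | exact Dvd.intro _ rfl
            | exact Dvd.intro_left _ rfl
      · rw [Ideal.span_le, Set.singleton_subset_iff]
        have := entry_mem_detDiv_one B 1 0
        simpa [hBdef] using this
    have hdC1 : detDiv 1 (A * B) = c 1 := by
      rw [he, hh]
      refine le_antisymm (detDiv_one_le _ ?_) ?_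
      · intro i j
        rw [hAB]
        fin_cases i <;> fin_cases j <;>
          simp [Ideal.mem_span_singleton] <;>
          first
            | exact mul_dvd_mul_left (α * β) hht
            | exact mul_dvd_mul_left (α * β) hhs
      · rw [Ideal.span_le, Set.singleton_subset_iff, hAB]
        simpa using entry_mem_detDiv_one !![α * β * h, -(α * β * t); α * β * s, 0] 0 0
    have hdA2 : detDiv 2 A = a 2 := by
      rw [detDiv_two, hdetA, hda, hs]
    have hdB2 : detDiv 2 B = b 2 := by
      rw [detDiv_two, hdetB, hdb, ht]
    have hdC2 : detDiv 2 (A * B) = c 2 := by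
      rw [detDiv_two, Matrix.det_mul, hdetA, hdetB, ← heq2, hda, hdb, hs, ht,
        Ideal.span_singleton_mul_span_singleton]
    refine ⟨A, B, by rw [hdetA]; exact mul_ne_zero (pow_ne_zero _ hα0) hs0,
      by rw [hdetB]; exact mul_ne_zero (pow_ne_zero _ hβ0) ht0, ?_⟩
    intro k hk1 hk2
    interval_cases k
    · exact ⟨hdA1, hdB1, hdC1⟩
    · exact ⟨hdA2, hdB2, hdC2⟩
end

section
/- Let ø be a Dedekind domain and let B be an n×n matrix over ø with nonzero determinant. Then there exist P, Q ∈ GL_n(ø) such that the transpose of B satisfies Bᵀ = P B Q; in other words, U_n Bᵀ U_n = U_n B U_n where U_n = GL_n(ø). -/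
open Matrix Sum

namespace TransposeEquiv

variable {A : Type*} [CommRing A]

section Lists

variable {n : Type*} [Fintype n] [DecidableEq n]

open Matrix.TransvectionStruct

lemma prod_transvection_eq_one_add (l : List (n × n × A))
    (h : ∀ p ∈ l, ∀ q ∈ l, p.2.1 ≠ q.1) :
    (l.map fun p => transvection p.1 p.2.1 p.2.2).prod
      = 1 + (l.map fun p => Matrix.single p.1 p.2.1 p.2.2).sum := by
  induction l with
  | nil => simp
  | cons p l ih =>
    have h' : ∀ a ∈ l, ∀ b ∈ l, a.2.1 ≠ b.1 := fun a ha b hb =>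
      h a (List.mem_cons_of_mem _ ha) b (List.mem_cons_of_mem _ hb)
    have hz : Matrix.single p.1 p.2.1 p.2.2 *
        (l.map fun q => Matrix.single q.1 q.2.1 q.2.2).sum = 0 := by
      rw [← List.sum_map_mul_left]
      apply List.sum_eq_zero
      intro x hx
      simp only [List.mem_map] at hx
      obtain ⟨q, hq, rfl⟩ := hx
      exact single_mul_single_of_ne _ _ _ _ (h p List.mem_cons_self q
        (List.mem_cons_of_mem _ hq)) _
    simp only [List.map_cons, List.prod_cons, List.sum_cons, ih h']
    rw [transvection, add_mul, one_mul, mul_add, mul_one, hz]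
    abel

/-- Swap (with a sign) as a list of transvections. -/
def swapTL (i j : n) (hij : i ≠ j) : List (Matrix.TransvectionStruct n A) :=
  [⟨i, j, hij, 1⟩, ⟨j, i, hij.symm, -1⟩, ⟨i, j, hij, 1⟩]

lemma swapTL_prod_mul (i j : n) (hij : i ≠ j) (M : Matrix n n A) (x y : n) :
    (((swapTL (A := A) i j hij).map toMatrix).prod * M) x y =
      if x = i then M j y else if x = j then -(M i y) else M x y := by
  simp only [swapTL, List.map_cons, List.map_nil, List.prod_cons, List.prod_nil,
    mul_one, toMatrix_mk, Matrix.mul_assoc]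
  by_cases hxi : x = i
  · subst hxi
    rw [if_pos rfl]
    simp only [transvection_mul_apply_same, transvection_mul_apply_of_ne _ _ _ _ hij,
      transvection_mul_apply_of_ne _ _ _ _ (Ne.symm hij)]
    ring
  · rw [if_neg hxi, transvection_mul_apply_of_ne _ _ _ _ hxi]
    by_cases hxj : x = j
    · subst hxj
      rw [if_pos rfl]
      simp only [transvection_mul_apply_same, transvection_mul_apply_of_ne _ _ _ _ hij,
        transvection_mul_apply_of_ne _ _ _ _ (Ne.symm hij)]
      ring
    · rw [if_neg hxj, transvection_mul_apply_of_ne _ _ _ _ hxj,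
        transvection_mul_apply_of_ne _ _ _ _ hxi]

lemma mul_swapTL_prod (i j : n) (hij : i ≠ j) (M : Matrix n n A) (x y : n) :
    (M * ((swapTL (A := A) i j hij).map toMatrix).prod) x y =
      if y = i then -(M x j) else if y = j then M x i else M x y := by
  simp only [swapTL, List.map_cons, List.map_nil, List.prod_cons, List.prod_nil,
    mul_one, toMatrix_mk, ← Matrix.mul_assoc]
  by_cases hyj : y = j
  · subst hyj
    rw [if_neg (Ne.symm hij), if_pos rfl]
    simp only [mul_transvection_apply_same, mul_transvection_apply_of_ne _ _ _ _ hij,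
      mul_transvection_apply_of_ne _ _ _ _ (Ne.symm hij)]
    ring
  · rw [mul_transvection_apply_of_ne _ _ _ _ hyj]
    by_cases hyi : y = i
    · subst hyi
      rw [if_pos rfl]
      simp only [mul_transvection_apply_same, mul_transvection_apply_of_ne _ _ _ _ hij,
        mul_transvection_apply_of_ne _ _ _ _ (Ne.symm hij)]
      ring
    · rw [if_neg hyi, if_neg hyj, mul_transvection_apply_of_ne _ _ _ _ hyi,
        mul_transvection_apply_of_ne _ _ _ _ hyj]

end Lists

section Pivot

variable {r : ℕ}

open Matrix.TransvectionStruct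

/-- Transvections clearing the last column. -/
def colOps (v : Fin r → A) : List (Matrix.TransvectionStruct (Fin r ⊕ Unit) A) :=
  List.ofFn fun i => ⟨inl i, inr (), by simp, v i⟩

/-- Transvections clearing the last row. -/
def rowOps (v : Fin r → A) : List (Matrix.TransvectionStruct (Fin r ⊕ Unit) A) :=
  List.ofFn fun i => ⟨inr (), inl i, by simp, v i⟩

lemma colOps_prod (v : Fin r → A) :
    ((colOps v).map toMatrix).prod
      = 1 + ∑ i : Fin r, Matrix.single (inl i) (inr ()) (v i) := by
  have h := prod_transvection_eq_one_add
    (List.ofFn fun i : Fin r => ((inl i : Fin r ⊕ Unit), ((inr () : Fin r ⊕ Unit), v i)))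
    (by
      intro p hp q hq
      rw [List.mem_ofFn] at hp hq
      obtain ⟨a, rfl⟩ := hp
      obtain ⟨b, rfl⟩ := hq
      simp)
  simp only [List.map_ofFn] at h
  rw [colOps, List.map_ofFn]
  convert h using 2
  · rfl
  rw [← List.sum_ofFn]
  congr 1

lemma rowOps_prod (v : Fin r → A) :
    ((rowOps v).map toMatrix).prod
      = 1 + ∑ i : Fin r, Matrix.single (inr ()) (inl i) (v i) := by
  have h := prod_transvection_eq_one_add
    (List.ofFn fun i : Fin r => ((inr () : Fin r ⊕ Unit), ((inl i : Fin r ⊕ Unit), v i)))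
    (by
      intro p hp q hq
      rw [List.mem_ofFn] at hp hq
      obtain ⟨a, rfl⟩ := hp
      obtain ⟨b, rfl⟩ := hq
      simp)
  simp only [List.map_ofFn] at h
  rw [rowOps, List.map_ofFn]
  convert h using 2
  · rfl
  rw [← List.sum_ofFn]
  congr 1

lemma colOps_mul_apply_inl (v : Fin r → A) (M : Matrix (Fin r ⊕ Unit) (Fin r ⊕ Unit) A)
    (i : Fin r) (y : Fin r ⊕ Unit) :
    (((colOps v).map toMatrix).prod * M) (inl i) y = M (inl i) y + v i * M (inr ()) y := by
  rw [colOps_prod, add_mul, one_mul, Matrix.add_apply, Matrix.sum_mul]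
  congr 1
  rw [Matrix.sum_apply]
  rw [Finset.sum_eq_single i]
  · rw [single_mul_apply_same]
  · intro b _ hb
    exact single_mul_apply_of_ne (v b) (inl b) (inr ()) (inl i) y
      (by simpa using (Ne.symm hb)) M
  · simp

lemma colOps_mul_apply_inr (v : Fin r → A) (M : Matrix (Fin r ⊕ Unit) (Fin r ⊕ Unit) A)
    (y : Fin r ⊕ Unit) :
    (((colOps v).map toMatrix).prod * M) (inr ()) y = M (inr ()) y := by
  rw [colOps_prod, add_mul, one_mul, Matrix.add_apply, Matrix.sum_mul, Matrix.sum_apply]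
  have : ∀ b ∈ Finset.univ (α := Fin r),
      ((Matrix.single (inl b) (inr ()) (v b) : Matrix (Fin r ⊕ Unit) (Fin r ⊕ Unit) A) * M) (inr ()) y = 0 := by
    intro b _
    exact single_mul_apply_of_ne (v b) (inl b) (inr ()) (inr ()) y
      (by simp) M
  rw [Finset.sum_eq_zero this, add_zero]

lemma mul_rowOps_apply_inl (v : Fin r → A) (M : Matrix (Fin r ⊕ Unit) (Fin r ⊕ Unit) A)
    (x : Fin r ⊕ Unit) (i : Fin r) :
    (M * ((rowOps v).map toMatrix).prod) x (inl i) = M x (inl i) + M x (inr ()) * v i := by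
  rw [rowOps_prod, mul_add, mul_one, Matrix.add_apply, Matrix.mul_sum]
  congr 1
  rw [Matrix.sum_apply]
  rw [Finset.sum_eq_single i]
  · rw [mul_single_apply_same]
  · intro b _ hb
    exact mul_single_apply_of_ne (v b) (inr ()) (inl b) x (inl i)
      (by simpa using (Ne.symm hb)) M
  · simp

lemma mul_rowOps_apply_inr (v : Fin r → A) (M : Matrix (Fin r ⊕ Unit) (Fin r ⊕ Unit) A)
    (x : Fin r ⊕ Unit) :
    (M * ((rowOps v).map toMatrix).prod) x (inr ()) = M x (inr ()) := by
  rw [rowOps_prod, mul_add, mul_one, Matrix.add_apply, Matrix.mul_sum, Matrix.sum_apply]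
  have : ∀ b ∈ Finset.univ (α := Fin r),
      (M * (Matrix.single (inr ()) (inl b) (v b) : Matrix (Fin r ⊕ Unit) (Fin r ⊕ Unit) A)) x (inr ()) = 0 := by
    intro b _
    exact mul_single_apply_of_ne (v b) (inr ()) (inl b) x (inr ())
      (by simp) M
  rw [Finset.sum_eq_zero this, add_zero]

end Pivot

section Pivot2

variable {r : ℕ}

open Matrix.TransvectionStruct

lemma exists_dvd_min_list : (∀ a b : A, a ∣ b ∨ b ∣ a) → ∀ l : List A, l ≠ [] →
    ∃ p ∈ l, ∀ q ∈ l, p ∣ q := by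
  intro hA l
  induction l with
  | nil => intro h; exact absurd rfl h
  | cons a l ih =>
    intro _
    rcases eq_or_ne l [] with rfl | hl
    · exact ⟨a, List.mem_cons_self, by simp⟩
    · obtain ⟨p, hp, hpd⟩ := ih hl
      rcases hA a p with h | h
      · exact ⟨a, List.mem_cons_self, by
          intro q hq
          rcases List.mem_cons.mp hq with rfl | hq
          · exact dvd_rfl
          · exact h.trans (hpd q hq)⟩
      · exact ⟨p, List.mem_cons_of_mem _ hp, by
          intro q hq
          rcases List.mem_cons.mp hq with rfl | hq
          · exact h
          · exact hpd q hq⟩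

lemma exists_dvd_min (hA : ∀ a b : A, a ∣ b ∨ b ∣ a)
    (M : Matrix (Fin r ⊕ Unit) (Fin r ⊕ Unit) A) :
    ∃ i₀ j₀, ∀ x y, M i₀ j₀ ∣ M x y := by
  classical
  set l := ((Finset.univ : Finset ((Fin r ⊕ Unit) × (Fin r ⊕ Unit))).toList).map
    (fun q => M q.1 q.2) with hl
  have hne : l ≠ [] := by
    simp only [hl, ne_eq, List.map_eq_nil_iff, Finset.toList_eq_nil]
    exact fun h => (Finset.univ_eq_empty_iff.mp h).elim' (inr (), inr ())
  obtain ⟨p, hp, hdvd⟩ := exists_dvd_min_list hA l hne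
  rw [hl, List.mem_map] at hp
  obtain ⟨⟨i₀, j₀⟩, _, rfl⟩ := hp
  refine ⟨i₀, j₀, fun x y => hdvd _ ?_⟩
  rw [hl, List.mem_map]
  exact ⟨(x, y), by simp, rfl⟩

lemma exists_corner_dvd (hA : ∀ a b : A, a ∣ b ∨ b ∣ a)
    (M : Matrix (Fin r ⊕ Unit) (Fin r ⊕ Unit) A) :
    ∃ L R : List (Matrix.TransvectionStruct (Fin r ⊕ Unit) A),
      ∀ x y, ((L.map toMatrix).prod * M * (R.map toMatrix).prod) (inr ()) (inr ())
        ∣ ((L.map toMatrix).prod * M * (R.map toMatrix).prod) x y := by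
  classical
  obtain ⟨i₀, j₀, hp⟩ := exists_dvd_min hA M
  let L : List (Matrix.TransvectionStruct (Fin r ⊕ Unit) A) :=
    if h : i₀ = inr () then [] else swapTL (inr ()) i₀ (Ne.symm h)
  set N₁ := (L.map toMatrix).prod * M with hN₁
  have claim1 : ∀ x y, ∃ s, N₁ x y = M s y ∨ N₁ x y = -(M s y) := by
    intro x y
    by_cases h : i₀ = inr ()
    · exact ⟨x, Or.inl (by simp [hN₁, L, h])⟩
    · have := swapTL_prod_mul (A := A) (inr ()) i₀ (Ne.symm h) M x y
      rw [hN₁, show L = swapTL (inr ()) i₀ (Ne.symm h) from dif_neg h, this]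
      split_ifs with h1 h2
      · exact ⟨i₀, Or.inl rfl⟩
      · exact ⟨inr (), Or.inr rfl⟩
      · exact ⟨x, Or.inl rfl⟩
  have claim2 : ∀ y, N₁ (inr ()) y = M i₀ y := by
    intro y
    by_cases h : i₀ = inr ()
    · simp [hN₁, L, h]
    · have := swapTL_prod_mul (A := A) (inr ()) i₀ (Ne.symm h) M (inr ()) y
      rw [hN₁, show L = swapTL (inr ()) i₀ (Ne.symm h) from dif_neg h, this, if_pos rfl]
  let R : List (Matrix.TransvectionStruct (Fin r ⊕ Unit) A) :=
    if h : j₀ = inr () then [] else swapTL j₀ (inr ()) h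
  refine ⟨L, R, ?_⟩
  set N := N₁ * (R.map toMatrix).prod with hN
  have claim3 : ∀ x, N x (inr ()) = N₁ x j₀ := by
    intro x
    by_cases h : j₀ = inr ()
    · simp [hN, R, h]
    · have := mul_swapTL_prod (A := A) j₀ (inr ()) h N₁ x (inr ())
      rw [hN, show R = swapTL j₀ (inr ()) h from dif_neg h, this, if_neg (Ne.symm h),
        if_pos rfl]
  have claim4 : ∀ x y, ∃ t, N x y = N₁ x t ∨ N x y = -(N₁ x t) := by
    intro x y
    by_cases h : j₀ = inr ()
    · exact ⟨y, Or.inl (by simp [hN, R, h])⟩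
    · have := mul_swapTL_prod (A := A) j₀ (inr ()) h N₁ x y
      rw [hN, show R = swapTL j₀ (inr ()) h from dif_neg h, this]
      split_ifs with h1 h2
      · exact ⟨inr (), Or.inr rfl⟩
      · exact ⟨j₀, Or.inl rfl⟩
      · exact ⟨y, Or.inl rfl⟩
  intro x y
  have hcorner : N (inr ()) (inr ()) = M i₀ j₀ := by rw [claim3, claim2]
  rw [hcorner]
  obtain ⟨t, ht⟩ := claim4 x y
  obtain ⟨s, hs⟩ := claim1 x t
  rcases ht with ht | ht <;> rw [ht] <;> rcases hs with hs | hs <;> rw [hs]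
  · exact hp s t
  · exact (dvd_neg).mpr (hp s t)
  · exact (dvd_neg).mpr (hp s t)
  · exact (dvd_neg).mpr ((dvd_neg).mpr (hp s t))

lemma exists_isTwoBlockDiagonal_of_corner_dvd
    (M : Matrix (Fin r ⊕ Unit) (Fin r ⊕ Unit) A)
    (h : ∀ x y, M (inr ()) (inr ()) ∣ M x y) :
    ∃ L R : List (Matrix.TransvectionStruct (Fin r ⊕ Unit) A),
      IsTwoBlockDiagonal ((L.map toMatrix).prod * M * (R.map toMatrix).prod) := by
  classical
  have hc : ∀ i : Fin r, ∃ c, M (inl i) (inr ()) = M (inr ()) (inr ()) * c :=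
    fun i => (h (inl i) (inr ()))
  choose c hc using hc
  have he : ∀ i : Fin r, ∃ e, M (inr ()) (inl i) = M (inr ()) (inr ()) * e :=
    fun i => (h (inr ()) (inl i))
  choose e he using he
  refine ⟨colOps (fun i => -(c i)), rowOps (fun i => -(e i)), ?_⟩
  set N₁ := ((colOps (fun i => -(c i))).map toMatrix).prod * M with hN₁
  have h1 : ∀ i : Fin r, N₁ (inl i) (inr ()) = 0 := by
    intro i
    rw [hN₁, colOps_mul_apply_inl, hc i]
    ring
  have h2 : ∀ y, N₁ (inr ()) y = M (inr ()) y := fun y => colOps_mul_apply_inr _ M y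
  constructor
  · ext i j
    have : j = () := rfl
    rw [Matrix.toBlocks₁₂]
    simp only [Matrix.zero_apply, Matrix.of_apply]
    rw [mul_rowOps_apply_inr]
    exact h1 i
  · ext j i
    have : j = () := rfl
    rw [Matrix.toBlocks₂₁]
    simp only [Matrix.zero_apply, Matrix.of_apply]
    rw [mul_rowOps_apply_inl, h2, h2, he i]
    ring

lemma exists_isTwoBlockDiagonal (hA : ∀ a b : A, a ∣ b ∨ b ∣ a)
    (M : Matrix (Fin r ⊕ Unit) (Fin r ⊕ Unit) A) :
    ∃ L R : List (Matrix.TransvectionStruct (Fin r ⊕ Unit) A),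
      IsTwoBlockDiagonal ((L.map toMatrix).prod * M * (R.map toMatrix).prod) := by
  obtain ⟨L₁, R₁, h₁⟩ := exists_corner_dvd hA M
  obtain ⟨L₂, R₂, h₂⟩ := exists_isTwoBlockDiagonal_of_corner_dvd _ (h₁ · ·)
  refine ⟨L₂ ++ L₁, R₁ ++ R₂, ?_⟩
  simpa [List.map_append, List.prod_append, Matrix.mul_assoc] using h₂

end Pivot2


section Induction

open Matrix.TransvectionStruct

variable {r : ℕ}

lemma eq_diagonal_induction
    (IH : ∀ M : Matrix (Fin r) (Fin r) A,
      ∃ (L₀ L₀' : List (Matrix.TransvectionStruct (Fin r) A)) (D₀ : Fin r → A),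
        (L₀.map toMatrix).prod * M * (L₀'.map toMatrix).prod = diagonal D₀)
    (hA : ∀ a b : A, a ∣ b ∨ b ∣ a)
    (M : Matrix (Fin r ⊕ Unit) (Fin r ⊕ Unit) A) :
    ∃ (L L' : List (Matrix.TransvectionStruct (Fin r ⊕ Unit) A)) (D : Fin r ⊕ Unit → A),
      (L.map toMatrix).prod * M * (L'.map toMatrix).prod = diagonal D := by
  rcases exists_isTwoBlockDiagonal hA M with ⟨L₁, L₁', hM⟩
  let M' := (L₁.map toMatrix).prod * M * (L₁'.map toMatrix).prod
  let M'' := toBlocks₁₁ M'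
  rcases IH M'' with ⟨L₀, L₀', D₀, h₀⟩
  set c := M' (inr ()) (inr ()) with hc
  refine
    ⟨L₀.map (sumInl Unit) ++ L₁, L₁' ++ L₀'.map (sumInl Unit),
      Sum.elim D₀ fun _ => M' (inr ()) (inr ()), ?_⟩
  suffices (L₀.map (toMatrix ∘ sumInl Unit)).prod * M' * (L₀'.map (toMatrix ∘ sumInl Unit)).prod =
      diagonal (Sum.elim D₀ fun _ => c) by
    simpa [M', c, Matrix.mul_assoc]
  have : M' = fromBlocks M'' 0 0 (diagonal fun _ => c) := by
    rw [← fromBlocks_toBlocks M', hM.1, hM.2]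
    rfl
  rw [this]
  simp [h₀]

lemma reindex_eq_diagonal {n p : Type*} [Fintype n] [Fintype p] [DecidableEq n] [DecidableEq p]
    (M : Matrix p p A) (e : p ≃ n)
    (H : ∃ (L L' : List (Matrix.TransvectionStruct n A)) (D : n → A),
        (L.map toMatrix).prod * Matrix.reindexAlgEquiv A _ e M * (L'.map toMatrix).prod =
          diagonal D) :
    ∃ (L L' : List (Matrix.TransvectionStruct p A)) (D : p → A),
      (L.map toMatrix).prod * M * (L'.map toMatrix).prod = diagonal D := by
  rcases H with ⟨L₀, L₀', D₀, h₀⟩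
  refine ⟨L₀.map (reindexEquiv e.symm), L₀'.map (reindexEquiv e.symm), D₀ ∘ e, ?_⟩
  have : M = reindexAlgEquiv A _ e.symm (reindexAlgEquiv A _ e M) := by
    simp only [Equiv.symm_symm, submatrix_submatrix, reindex_apply, submatrix_id_id,
      Equiv.symm_comp_self, reindexAlgEquiv_apply]
  rw [this]
  simp only [toMatrix_reindexEquiv_prod, List.map_map, reindexAlgEquiv_apply]
  simp only [← reindexAlgEquiv_apply A, ← reindexAlgEquiv_mul, h₀]
  simp only [Equiv.symm_symm, reindex_apply, submatrix_diagonal_equiv, reindexAlgEquiv_apply]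

lemma exists_diagonal_aux (hA : ∀ a b : A, a ∣ b ∨ b ∣ a) (n : Type) [Fintype n]
    [DecidableEq n] (M : Matrix n n A) :
    ∃ (L L' : List (Matrix.TransvectionStruct n A)) (D : n → A),
      (L.map toMatrix).prod * M * (L'.map toMatrix).prod = diagonal D := by
  induction' hn : Fintype.card n with r IH generalizing n M
  · refine ⟨List.nil, List.nil, fun _ => 1, ?_⟩
    ext i j
    rw [Fintype.card_eq_zero_iff] at hn
    exact hn.elim' i
  · have e : n ≃ Fin r ⊕ Unit := by
      refine Fintype.equivOfCardEq ?_
      rw [hn]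
      rw [@Fintype.card_sum (Fin r) Unit _ _]
      simp
    apply reindex_eq_diagonal M e
    apply eq_diagonal_induction (fun N => IH (Fin r) N (by simp)) hA

lemma exists_diagonal (hA : ∀ a b : A, a ∣ b ∨ b ∣ a) {n : Type*} [Fintype n]
    [DecidableEq n] (M : Matrix n n A) :
    ∃ (L L' : List (Matrix.TransvectionStruct n A)) (D : n → A),
      (L.map toMatrix).prod * M * (L'.map toMatrix).prod = diagonal D := by
  have e : n ≃ Fin (Fintype.card n) := Fintype.equivOfCardEq (by simp)
  apply reindex_eq_diagonal M e
  apply exists_diagonal_aux hA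

end Induction

section Transport

open Matrix.TransvectionStruct

variable {B : Type*} [CommRing B]
variable {n : Type*} [Fintype n] [DecidableEq n]

lemma map_transvection (f : A →+* B) (i j : n) (c : A) :
    (transvection i j c).map f = transvection i j (f c) := by
  ext x y
  simp only [transvection, Matrix.map_apply, Matrix.add_apply, map_add, Matrix.single,
    Matrix.one_apply, Matrix.of_apply]
  congr 1
  · split_ifs <;> simp
  · split_ifs <;> simp

/-- Map a transvection structure along a ring hom. -/
def tmap (f : A →+* B) (t : Matrix.TransvectionStruct n A) : Matrix.TransvectionStruct n B :=
  ⟨t.i, t.j, t.hij, f t.c⟩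

lemma toMatrix_tmap (f : A →+* B) (t : Matrix.TransvectionStruct n A) :
    (tmap f t).toMatrix = t.toMatrix.map f := by
  rcases t with ⟨i, j, hij, c⟩
  simp [tmap, toMatrix, map_transvection]

lemma prod_toMatrix_map (f : A →+* B) (L : List (Matrix.TransvectionStruct n A)) :
    (((L.map (tmap f)).map toMatrix).prod) = ((L.map toMatrix).prod).map f := by
  have h := map_list_prod (f.mapMatrix (m := n)) (L.map toMatrix)
  rw [RingHom.mapMatrix_apply] at h
  rw [h, List.map_map, List.map_map]
  congr 1
  apply List.map_congr_left
  intro t _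
  simp only [Function.comp_apply, toMatrix_tmap, RingHom.mapMatrix_apply]

lemma list_prod_pick {M₀ : Type*} [Monoid M₀] {ι : Type*} :
    ∀ (l : List ι), l.Nodup → ∀ k ∈ l, ∀ f : ι → M₀,
      (∀ i ∈ l, i ≠ k → f i = 1) → (l.map f).prod = f k := by
  intro l
  induction l with
  | nil => intro _ k hk; exact absurd hk (List.not_mem_nil)
  | cons a l ih =>
    intro hnd k hk f hf
    rcases List.mem_cons.mp hk with rfl | hk'
    · have : ∀ x ∈ l.map f, x = 1 := by
        intro x hx
        obtain ⟨i, hi, rfl⟩ := List.mem_map.mp hx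
        exact hf i (List.mem_cons_of_mem _ hi) (fun h => (List.nodup_cons.mp hnd).1 (h ▸ hi))
      rw [List.map_cons, List.prod_cons, List.prod_eq_one this, mul_one]
    · have ha : f a = 1 := hf a (List.mem_cons_self)
        (fun h => (List.nodup_cons.mp hnd).1 (h ▸ hk'))
      rw [List.map_cons, List.prod_cons, ha, one_mul]
      exact ih (List.nodup_cons.mp hnd).2 k hk' f
        (fun i hi hik => hf i (List.mem_cons_of_mem _ hi) hik)

lemma prod_flatMap {M₀ : Type*} [Monoid M₀] {ι : Type*} (f : ι → List M₀) :
    ∀ (l : List ι), (l.flatMap f).prod = (l.map fun i => (f i).prod).prod := by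
  intro l
  induction l with
  | nil => simp
  | cons a l ih => simp [List.flatMap_cons, List.prod_append, ih]

end Transport

section Pi

open Matrix.TransvectionStruct

variable {ι : Type*} [Fintype ι] [DecidableEq ι] (𝔄 : ι → Type*) [∀ i, CommRing (𝔄 i)]
variable {n : Type*} [Fintype n] [DecidableEq n]

/-- Lift a transvection structure into a product ring, acting by zero elsewhere. -/
def tlift (i : ι) (t : Matrix.TransvectionStruct n (𝔄 i)) :
    Matrix.TransvectionStruct n (∀ j, 𝔄 j) :=
  ⟨t.i, t.j, t.hij, Pi.single i t.c⟩

lemma diagProp_pi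
    (h : ∀ i (M : Matrix n n (𝔄 i)),
      ∃ (L L' : List (Matrix.TransvectionStruct n (𝔄 i))) (D : n → 𝔄 i),
        (L.map toMatrix).prod * M * (L'.map toMatrix).prod = diagonal D)
    (M : Matrix n n (∀ i, 𝔄 i)) :
    ∃ (L L' : List (Matrix.TransvectionStruct n (∀ i, 𝔄 i))) (D : n → ∀ i, 𝔄 i),
      (L.map toMatrix).prod * M * (L'.map toMatrix).prod = diagonal D := by
  have h' := fun i => h i (M.map (Pi.evalRingHom 𝔄 i))
  choose Ls Rs Ds hLR using h'
  let L : List (Matrix.TransvectionStruct n (∀ i, 𝔄 i)) :=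
    (Finset.univ : Finset ι).toList.flatMap fun i => (Ls i).map (tlift 𝔄 i)
  let R : List (Matrix.TransvectionStruct n (∀ i, 𝔄 i)) :=
    (Finset.univ : Finset ι).toList.flatMap fun i => (Rs i).map (tlift 𝔄 i)
  have key : ∀ (k : ι) (Xs : ∀ i, List (Matrix.TransvectionStruct n (𝔄 i))),
      ((((Finset.univ : Finset ι).toList.flatMap fun i => (Xs i).map (tlift 𝔄 i)).map
        toMatrix).prod).map (Pi.evalRingHom 𝔄 k) = ((Xs k).map toMatrix).prod := by
    intro k Xs
    have h1 := map_list_prod ((Pi.evalRingHom 𝔄 k).mapMatrix (m := n))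
      ((((Finset.univ : Finset ι).toList.flatMap fun i => (Xs i).map (tlift 𝔄 i)).map toMatrix))
    rw [RingHom.mapMatrix_apply] at h1
    rw [h1, List.map_map, List.map_flatMap]
    have h2 : ∀ i, ((Xs i).map (tlift 𝔄 i)).map ((Pi.evalRingHom 𝔄 k).mapMatrix ∘ toMatrix)
        = (Xs i).map fun t =>
            transvection t.i t.j (Pi.single (M := 𝔄) i t.c k) := by
      intro i
      rw [List.map_map]
      apply List.map_congr_left
      intro t _
      simp only [Function.comp_apply, RingHom.mapMatrix_apply]
      rcases t with ⟨ti, tj, htij, tc⟩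
      rw [tlift, toMatrix_mk, map_transvection]
      rfl
    rw [prod_flatMap]
    have h3 : ∀ i ∈ (Finset.univ : Finset ι).toList, i ≠ k →
        ((((Xs i).map (tlift 𝔄 i)).map ((Pi.evalRingHom 𝔄 k).mapMatrix ∘ toMatrix)).prod) = 1 := by
      intro i _ hik
      rw [h2]
      apply List.prod_eq_one
      intro x hx
      obtain ⟨t, _, rfl⟩ := List.mem_map.mp hx
      rw [Pi.single_eq_of_ne' hik, transvection_zero]
    rw [list_prod_pick _ (Finset.nodup_toList _) k (by simp) _ h3, h2]
    congr 1
    apply List.map_congr_left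
    intro t _
    rw [Pi.single_eq_same]
    rfl
  refine ⟨L, R, fun x i => Ds i x, ?_⟩
  have main : ∀ k, (((L.map toMatrix).prod * M * ((R.map toMatrix).prod)).map
      (Pi.evalRingHom 𝔄 k)) = (diagonal (fun x i => Ds i x)).map (Pi.evalRingHom 𝔄 k) := by
    intro k
    rw [Matrix.map_mul, Matrix.map_mul]
    rw [key k Ls, key k Rs, hLR k]
    rw [Matrix.diagonal_map (by simp)]
    congr 1
  ext x y k
  have h4 : (((L.map toMatrix).prod * M * ((R.map toMatrix).prod)).map
      (Pi.evalRingHom 𝔄 k)) x y = ((diagonal (fun x i => Ds i x)).map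
      (Pi.evalRingHom 𝔄 k)) x y := by rw [main k]
  simpa [Matrix.map_apply] using h4

end Pi

section Arith

open Matrix.TransvectionStruct

lemma diagProp_ringEquiv {B : Type*} [CommRing B] {n : Type*} [Fintype n] [DecidableEq n]
    (e : A ≃+* B)
    (h : ∀ M : Matrix n n A,
      ∃ (L L' : List (Matrix.TransvectionStruct n A)) (D : n → A),
        (L.map toMatrix).prod * M * (L'.map toMatrix).prod = diagonal D)
    (M : Matrix n n B) :
    ∃ (L L' : List (Matrix.TransvectionStruct n B)) (D : n → B),
      (L.map toMatrix).prod * M * (L'.map toMatrix).prod = diagonal D := by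
  obtain ⟨L, L', D, hD⟩ := h (M.map (e.symm : B →+* A))
  refine ⟨L.map (tmap (e : A →+* B)), L'.map (tmap (e : A →+* B)), fun x => e (D x), ?_⟩
  rw [prod_toMatrix_map, prod_toMatrix_map]
  have h2 := congrArg (fun X : Matrix n n A => X.map (e : A →+* B)) hD
  simp only [Matrix.map_mul] at h2
  have h3 : (M.map (e.symm : B →+* A)).map (e : A →+* B) = M := by
    rw [Matrix.map_map]
    have : ((e : A →+* B) : A → B) ∘ ((e.symm : B →+* A) : B → A) = id := by
      funext t; simp
    rw [this, Matrix.map_id]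
  rw [h3] at h2
  rw [h2, Matrix.diagonal_map (map_zero _)]
  rfl

lemma chain_quotient_prime_pow {R : Type*} [CommRing R] [IsDomain R] [IsDedekindDomain R]
    {P : Ideal R} (hP : Prime P) (e : ℕ) :
    ∀ a b : R ⧸ (P ^ e), a ∣ b ∨ b ∣ a := by
  have key : ∀ x y : R, (Ideal.span {y} ⊔ P ^ e) ≤ (Ideal.span {x} ⊔ P ^ e) →
      (Ideal.Quotient.mk (P ^ e) x ∣ Ideal.Quotient.mk (P ^ e) y) := by
    intro x y hle
    have hy : y ∈ Ideal.span {x} ⊔ P ^ e :=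
      hle (Submodule.mem_sup_left (Ideal.mem_span_singleton_self y))
    obtain ⟨m, hm, z, hz, hmz⟩ := Submodule.mem_sup.mp hy
    obtain ⟨c, hc⟩ := Ideal.mem_span_singleton'.mp hm
    refine ⟨Ideal.Quotient.mk _ c, ?_⟩
    rw [← hmz, map_add, ← hc, _root_.map_mul]
    rw [show Ideal.Quotient.mk (P ^ e) z = 0 from (Ideal.Quotient.eq_zero_iff_mem).mpr hz]
    ring
  intro a b
  obtain ⟨x, rfl⟩ := Ideal.Quotient.mk_surjective a
  obtain ⟨y, rfl⟩ := Ideal.Quotient.mk_surjective b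
  have hx : Ideal.span {x} ⊔ P ^ e ∣ P ^ e := Ideal.dvd_iff_le.mpr le_sup_right
  have hyd : Ideal.span {y} ⊔ P ^ e ∣ P ^ e := Ideal.dvd_iff_le.mpr le_sup_right
  obtain ⟨i, hie, hxi⟩ := (dvd_prime_pow hP e).mp hx
  obtain ⟨j, hje, hyj⟩ := (dvd_prime_pow hP e).mp hyd
  rw [associated_iff_eq] at hxi hyj
  rcases le_total i j with hij | hij
  · exact Or.inl (key x y (by rw [hxi, hyj]; exact Ideal.pow_le_pow_right hij))
  · exact Or.inr (key y x (by rw [hxi, hyj]; exact Ideal.pow_le_pow_right hij))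

lemma diagProp_quotient {R : Type*} [CommRing R] [IsDomain R] [IsDedekindDomain R]
    {I : Ideal R} (hI : I ≠ ⊥) {n : Type*} [Fintype n] [DecidableEq n]
    (M : Matrix n n (R ⧸ I)) :
    ∃ (L L' : List (Matrix.TransvectionStruct n (R ⧸ I))) (D : n → R ⧸ I),
      (L.map toMatrix).prod * M * (L'.map toMatrix).prod = diagonal D := by
  classical
  refine diagProp_ringEquiv (IsDedekindDomain.quotientEquivPiFactors hI).symm ?_ M
  intro M'
  apply diagProp_pi
  intro P M''
  apply exists_diagonal
  exact chain_quotient_prime_pow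
    (UniqueFactorizationMonoid.prime_of_factor _ (Multiset.mem_toFinset.mp P.2)) _

lemma exists_list_lift {S : Type*} [CommRing S] {n : Type*} [Fintype n] [DecidableEq n]
    (f : A →+* S) (hf : Function.Surjective f) (L : List (Matrix.TransvectionStruct n S)) :
    ∃ L₀ : List (Matrix.TransvectionStruct n A), L₀.map (tmap f) = L := by
  induction L with
  | nil => exact ⟨[], rfl⟩
  | cons t L ih =>
    obtain ⟨L₀, hL₀⟩ := ih
    rcases t with ⟨i, j, hij, c⟩
    obtain ⟨c₀, rfl⟩ := hf c
    exact ⟨⟨i, j, hij, c₀⟩ :: L₀, by rw [List.map_cons, hL₀]; rfl⟩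

lemma det_prod_transvections {n : Type*} [Fintype n] [DecidableEq n] :
    ∀ L : List (Matrix.TransvectionStruct n A), ((L.map toMatrix).prod).det = 1 := by
  intro L
  induction L with
  | nil => simp
  | cons t L ih => rw [List.map_cons, List.prod_cons, Matrix.det_mul, ih,
      Matrix.TransvectionStruct.det, one_mul]

end Arith

end TransposeEquiv

open Matrix TransposeEquiv in
/-- A square matrix with nonzero determinant over a Dedekind domain is
unimodularly equivalent to its transpose. -/
theorem transpose_unimodular_equivalent (𝒪 : Type*) [CommRing 𝒪] [IsDomain 𝒪]
    [IsDedekindDomain 𝒪] (n : ℕ) (B : Matrix (Fin n) (Fin n) 𝒪)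
    (hB : B.det ≠ 0) :
    ∃ P Q : GL (Fin n) 𝒪, B.transpose = (P : Matrix (Fin n) (Fin n) 𝒪) * B * (Q : Matrix (Fin n) (Fin n) 𝒪) := by
  classical
  set d := B.det with hd
  set I : Ideal 𝒪 := Ideal.span {d ^ 2} with hI
  have hIbot : I ≠ ⊥ := by
    rw [hI, ne_eq, Ideal.span_singleton_eq_bot]
    exact pow_ne_zero 2 hB
  set π := Ideal.Quotient.mk I with hπ
  obtain ⟨L, R, D, hdiag⟩ := diagProp_quotient hIbot (B.map π)
  obtain ⟨L₀, hL₀⟩ := exists_list_lift π Ideal.Quotient.mk_surjective L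
  obtain ⟨R₀, hR₀⟩ := exists_list_lift π Ideal.Quotient.mk_surjective R
  choose D₀ hD₀ using fun x => Ideal.Quotient.mk_surjective (D x)
  set U := (L₀.map Matrix.TransvectionStruct.toMatrix).prod with hU
  set V := (R₀.map Matrix.TransvectionStruct.toMatrix).prod with hV
  have hUmap : U.map π = (L.map Matrix.TransvectionStruct.toMatrix).prod := by
    rw [← hL₀, prod_toMatrix_map]
  have hVmap : V.map π = (R.map Matrix.TransvectionStruct.toMatrix).prod := by
    rw [← hR₀, prod_toMatrix_map]
  have hdetU : U.det = 1 := det_prod_transvections L₀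
  have hdetV : V.det = 1 := det_prod_transvections R₀
  set N := U * B * V with hN
  have hNmap : N.map π = diagonal D := by
    rw [hN, Matrix.map_mul, Matrix.map_mul, hUmap, hVmap, hdiag]
  have hdmap : (diagonal D₀).map π = diagonal D := by
    rw [Matrix.diagonal_map (map_zero π)]
    exact congrArg Matrix.diagonal (funext hD₀)
  have hsub : ∀ x y, ∃ z, N x y - diagonal D₀ x y = d ^ 2 * z := by
    intro x y
    have h0 : π (N x y - diagonal D₀ x y) = 0 := by
      rw [map_sub]
      have e1 : π (N x y) = diagonal D x y := by
        have := congrFun (congrFun hNmap x) y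
        simpa [Matrix.map_apply] using this
      have e2 : π (diagonal D₀ x y) = diagonal D x y := by
        have := congrFun (congrFun hdmap x) y
        simpa [Matrix.map_apply] using this
      rw [e1, e2, sub_self]
    rw [hπ, Ideal.Quotient.eq_zero_iff_mem, hI, Ideal.mem_span_singleton] at h0
    exact h0
  choose z hz using hsub
  set G : Matrix (Fin n) (Fin n) 𝒪 := Matrix.of z with hG
  have hNdecomp : N = diagonal D₀ + (d ^ 2) • G := by
    ext x y
    have := hz x y
    simp only [Matrix.add_apply, Matrix.smul_apply, smul_eq_mul, hG, Matrix.of_apply]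
    linear_combination this
  have hdetN : N.det = d := by
    rw [hN, Matrix.det_mul, Matrix.det_mul, hdetU, hdetV, ← hd]
    ring
  have hF : N.transpose = N + (d ^ 2) • (G.transpose - G) := by
    rw [hNdecomp, Matrix.transpose_add, Matrix.transpose_smul, Matrix.diagonal_transpose,
      smul_sub]
    abel
  set W : Matrix (Fin n) (Fin n) 𝒪 := 1 + N.adjugate * (d • (G.transpose - G)) with hW
  have hNW : N.transpose = N * W := by
    rw [hW, Matrix.mul_add, Matrix.mul_one, hF]
    congr 1
    rw [← Matrix.mul_assoc, Matrix.mul_adjugate, hdetN, Matrix.smul_mul, Matrix.one_mul,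
      smul_smul]
    congr 1
    ring
  have hdetW : W.det = 1 := by
    have h1 : N.transpose.det = N.det * W.det := by rw [hNW, Matrix.det_mul]
    rw [Matrix.det_transpose, hdetN] at h1
    have h2 : d * W.det = d * 1 := by rw [mul_one, ← h1]
    exact mul_left_cancel₀ hB h2
  have hUu : IsUnit U := (Matrix.isUnit_iff_isUnit_det U).mpr (by rw [hdetU]; exact isUnit_one)
  have hVu : IsUnit V := (Matrix.isUnit_iff_isUnit_det V).mpr (by rw [hdetV]; exact isUnit_one)
  have hWu : IsUnit W := (Matrix.isUnit_iff_isUnit_det W).mpr (by rw [hdetW]; exact isUnit_one)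
  have hVTu : IsUnit V.transpose := (Matrix.isUnit_iff_isUnit_det _).mpr
    (by rw [Matrix.det_transpose, hdetV]; exact isUnit_one)
  have hUTu : IsUnit U.transpose := (Matrix.isUnit_iff_isUnit_det _).mpr
    (by rw [Matrix.det_transpose, hdetU]; exact isUnit_one)
  refine ⟨hVTu.unit⁻¹ * hUu.unit, hVu.unit * hWu.unit * hUTu.unit⁻¹, ?_⟩
  have hmain : V.transpose * B.transpose * U.transpose = U * B * (V * W) := by
    have hNT : N.transpose = V.transpose * B.transpose * U.transpose := by
      rw [hN, Matrix.transpose_mul, Matrix.transpose_mul, Matrix.mul_assoc]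
    rw [← hNT, hNW, hN]
    noncomm_ring
  have c1 : V.transpose * (↑(hVTu.unit⁻¹) : Matrix (Fin n) (Fin n) 𝒪) = 1 := by
    nth_rewrite 1 [← hVTu.unit_spec]
    exact hVTu.unit.mul_inv
  have c2 : (↑(hUTu.unit⁻¹) : Matrix (Fin n) (Fin n) 𝒪) * U.transpose = 1 := by
    nth_rewrite 2 [← hUTu.unit_spec]
    exact hUTu.unit.inv_mul
  refine hVTu.mul_left_cancel (hUTu.mul_right_cancel ?_)
  rw [hmain]
  simp only [Units.val_mul, IsUnit.unit_spec]
  simp only [Matrix.mul_assoc]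
  rw [c2, mul_one]
  conv_rhs => rw [← Matrix.mul_assoc]
  rw [c1, Matrix.one_mul]
end
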